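/- Let P be a Markov transition kernel on ℕ³ and let (X_n)_{n≥0} denote the canonical chain with trajectory law P_x when started at X₀ = x. Let S₁, S₂, … be subsets of ℕ³ and 0 < m₁ < m₂ < ⋯ an increasing sequence of integers. Suppose: (1) almost surely on the event ⋂_{n≥1}{X_{m_n} ∈ S_n}, we have X_n ≠ (0,0,0) for all n ≥ 1; (2) P_{(0,0,0)}(X_{m₁} ∈ S₁) > 0, and for all n ≥ 1 and every x ∈ S_n, P_x(X_{m_{n+1}−m_n} ∈ S_{n+1}) > 0; (3) there exists a sequence (p_n)_{n≥1} with values in [0,1] and Σ_{n≥1}(1−p_n) < ∞ such that for all n ≥ 1 and all x ∈ S_n, P_x(X_{m_{n+1}−m_n} ∈ S_{n+1}) ≥ p_n. Then P_{(0,0,0)}(X_n ≠ (0,0,0) for all n ≥ 1) > 0. -/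

import Mathlib

open scoped BigOperators
open MeasureTheory

namespace TransienceAux

abbrev St : Type := ℕ × ℕ × ℕ
abbrev Traj : Type := ℕ → St

def C (v : Traj) (t : ℕ) : Set Traj := {ω | ∀ i ≤ t, ω i = v i}

lemma measurableSet_st (T : Set St) : MeasurableSet T :=
  (Set.to_countable T).measurableSet

lemma measC (v : Traj) (t : ℕ) : MeasurableSet (C v t) := by
  have h : C v t = ⋂ i ∈ Finset.range (t+1), (fun ω : Traj => ω i) ⁻¹' {v i} := by
    ext ω
    simp [C, Nat.lt_succ_iff]
  rw [h]
  exact Finset.measurableSet_biInter _ fun i _ =>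
    (measurable_pi_apply i) (measurableSet_singleton _)

lemma measCoord (j : ℕ) (T : Set St) : MeasurableSet {ω : Traj | ω j ∈ T} :=
  (measurable_pi_apply j) (measurableSet_st T)

lemma mem_C_update (ω v : Traj) (t : ℕ) (z : St) :
    ω ∈ C (Function.update v (t+1) z) (t+1) ↔ ω ∈ C v t ∧ ω (t+1) = z := by
  constructor
  · intro h
    refine ⟨fun i hi => ?_, ?_⟩
    · have h2 := h i (le_trans hi (Nat.le_succ t))
      rwa [Function.update_of_ne (by omega)] at h2
    · have h2 := h (t+1) le_rfl
      rwa [Function.update_self] at h2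
  · rintro ⟨h1, h2⟩ i hi
    rcases eq_or_lt_of_le hi with h | h
    · subst h; rw [Function.update_self]; exact h2
    · rw [Function.update_of_ne (by omega)]
      exact h1 i (by omega)

lemma C_succ (v : Traj) (t : ℕ) :
    C v t = ⋃ z : St, C (Function.update v (t+1) z) (t+1) := by
  ext ω
  simp only [Set.mem_iUnion, mem_C_update]
  exact ⟨fun h => ⟨ω (t+1), h, rfl⟩, fun ⟨z, h, _⟩ => h⟩

lemma disj_update (v : Traj) (t : ℕ) :
    Pairwise (Function.onFun Disjoint fun z : St => C (Function.update v (t+1) z) (t+1)) := by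
  intro z z' hzz'
  simp only [Function.onFun, Set.disjoint_left]
  intro ω h h'
  exact hzz' (((mem_C_update ω v t z).mp h).2.symm.trans ((mem_C_update ω v t z').mp h').2)

section Main

variable (P : St → St → ℝ) (μ : St → Measure Traj)
variable (hPnonneg : ∀ x y, 0 ≤ P x y)
  (hprob : ∀ x, IsProbabilityMeasure (μ x))
  (hcyl : ∀ (x : St) (n : ℕ) (s : Traj),
      (μ x {ω | ∀ i ≤ n, ω i = s i}).toReal
        = (if s 0 = x then 1 else 0) * ∏ i ∈ Finset.range n, P (s i) (s (i + 1)))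

include hPnonneg hprob hcyl in
lemma cyl_step (y : St) (v : Traj) (t : ℕ) (z : St) :
    μ y (C (Function.update v (t+1) z) (t+1)) = μ y (C v t) * ENNReal.ofReal (P (v t) z) := by
  haveI := hprob y
  have h1 : (μ y (C (Function.update v (t+1) z) (t+1))).toReal
      = (if Function.update v (t+1) z 0 = y then 1 else 0)
        * ∏ i ∈ Finset.range (t+1),
            P (Function.update v (t+1) z i) (Function.update v (t+1) z (i+1)) :=
    hcyl y (t+1) (Function.update v (t+1) z)
  have h2 : (μ y (C v t)).toReal
      = (if v 0 = y then 1 else 0) * ∏ i ∈ Finset.range t, P (v i) (v (i+1)) := hcyl y t v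
  have hne1 : μ y (C (Function.update v (t+1) z) (t+1)) ≠ ⊤ := measure_ne_top _ _
  have hne2 : μ y (C v t) * ENNReal.ofReal (P (v t) z) ≠ ⊤ :=
    ENNReal.mul_ne_top (measure_ne_top _ _) ENNReal.ofReal_ne_top
  rw [← ENNReal.toReal_eq_toReal_iff' hne1 hne2]
  rw [h1, ENNReal.toReal_mul, ENNReal.toReal_ofReal (hPnonneg _ _), h2]
  have h0 : Function.update v (t+1) z 0 = v 0 := Function.update_of_ne (by omega) _ _
  rw [Finset.prod_range_succ, h0]
  have hprod : ∏ i ∈ Finset.range t,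
      P (Function.update v (t+1) z i) (Function.update v (t+1) z (i+1))
      = ∏ i ∈ Finset.range t, P (v i) (v (i+1)) := by
    refine Finset.prod_congr rfl fun i hi => ?_
    have hit : i < t := Finset.mem_range.mp hi
    rw [Function.update_of_ne (by omega), Function.update_of_ne (by omega)]
  rw [hprod, Function.update_of_ne (by omega), Function.update_self]
  ring

include hprob hcyl in
lemma coord_self (y : St) : μ y {ω : Traj | ω 0 = y} = 1 := by
  haveI := hprob y
  have h := hcyl y 0 (fun _ => y)
  have hs : {ω : Traj | ∀ i ≤ 0, ω i = y} = {ω : Traj | ω 0 = y} := by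
    ext ω
    simp [Nat.le_zero]
  rw [hs] at h
  have h' : ((μ y) {ω : Traj | ω 0 = y}).toReal = 1 := by simpa using h
  rwa [ENNReal.toReal_eq_one_iff] at h'

include hprob hcyl in
lemma coord_compl (y : St) : μ y {ω : Traj | ω 0 = y}ᶜ = 0 := by
  haveI := hprob y
  have hms : MeasurableSet {ω : Traj | ω 0 = y} := measCoord 0 {y}
  exact (prob_compl_eq_zero_iff hms).mpr (coord_self P μ hprob hcyl y)

include hprob hcyl in
lemma coord_zero_mem (y : St) (T : Set St) (h : y ∈ T) :
    μ y {ω : Traj | ω 0 ∈ T} = 1 := by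
  haveI := hprob y
  refine le_antisymm prob_le_one ?_
  rw [← coord_self P μ hprob hcyl y]
  exact measure_mono fun ω (hω : ω 0 = y) => by simp only [Set.mem_setOf_eq, hω]; exact h

include hprob hcyl in
lemma coord_zero_not (y : St) (T : Set St) (h : y ∉ T) :
    μ y {ω : Traj | ω 0 ∈ T} = 0 := by
  haveI := hprob y
  refine le_antisymm ?_ zero_le
  rw [← coord_compl P μ hprob hcyl y]
  exact measure_mono fun ω (hω : ω 0 ∈ T) hω' => h (by rwa [show ω 0 = y from hω'] at hω)

include hPnonneg hprob hcyl in
lemma markov :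
    ∀ (k t : ℕ) (v : Traj) (y : St) (T : Set St),
      μ y (C v t ∩ {ω : Traj | ω (t + k) ∈ T})
        = μ y (C v t) * μ (v t) {ω : Traj | ω k ∈ T} := by
  intro k
  induction k with
  | zero =>
    intro t v y T
    by_cases h : v t ∈ T
    · have hs : C v t ∩ {ω : Traj | ω (t+0) ∈ T} = C v t := by
        refine Set.inter_eq_left.mpr fun ω hω => ?_
        have : ω t = v t := hω t le_rfl
        simp only [Set.mem_setOf_eq, Nat.add_zero, this]
        exact h
      rw [hs, coord_zero_mem P μ hprob hcyl (v t) T h, mul_one]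
    · have hs : C v t ∩ {ω : Traj | ω (t+0) ∈ T} = ∅ := by
        ext ω
        simp only [Set.mem_inter_iff, Set.mem_setOf_eq, Set.mem_empty_iff_false, iff_false,
          not_and, Nat.add_zero]
        intro hω hT
        exact h (by rwa [hω t le_rfl] at hT)
      rw [hs, coord_zero_not P μ hprob hcyl (v t) T h, mul_zero]
      simp
  | succ k ih =>
    have fwd : ∀ (x : St) (T : Set St),
        μ x {ω : Traj | ω (k+1) ∈ T}
          = ∑' z : St, ENNReal.ofReal (P x z) * μ z {ω : Traj | ω k ∈ T} := by
      intro x T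
      haveI := hprob x
      have hC0 : C (fun _ => x) 0 = {ω : Traj | ω 0 = x} := by
        ext ω; simp [C, Nat.le_zero]
      have key : μ x (C (fun _ => x) 0 ∩ {ω : Traj | ω (k+1) ∈ T})
          = μ x {ω : Traj | ω (k+1) ∈ T} := by
        refine le_antisymm (measure_mono Set.inter_subset_right) ?_
        have hsub : {ω : Traj | ω (k+1) ∈ T}
            ⊆ (C (fun _ => x) 0 ∩ {ω : Traj | ω (k+1) ∈ T}) ∪ {ω : Traj | ω 0 = x}ᶜ := by
          intro ω hω
          by_cases h0 : ω 0 = x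
          · left; exact ⟨hC0 ▸ h0, hω⟩
          · right; exact h0
        calc μ x {ω : Traj | ω (k+1) ∈ T}
            ≤ μ x (C (fun _ => x) 0 ∩ {ω : Traj | ω (k+1) ∈ T}) + μ x {ω : Traj | ω 0 = x}ᶜ :=
              le_trans (measure_mono hsub) (measure_union_le _ _)
          _ = μ x (C (fun _ => x) 0 ∩ {ω : Traj | ω (k+1) ∈ T}) := by
              rw [coord_compl P μ hprob hcyl x, add_zero]
      rw [← key, C_succ (fun _ => x) 0, Set.iUnion_inter,
        measure_iUnion
          (fun z z' hzz' => ((disj_update (fun _ => x) 0) hzz').mono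
            Set.inter_subset_left Set.inter_subset_left)
          (fun z => (measC _ _).inter (measCoord _ _))]
      refine tsum_congr fun z => ?_
      have harg : {ω : Traj | ω (k+1) ∈ T} = {ω : Traj | ω (0 + 1 + k) ∈ T} := by
        norm_num [add_comm]
      rw [harg, ih (0+1) (Function.update (fun _ => x) (0+1) z) x T, Function.update_self,
        cyl_step P μ hPnonneg hprob hcyl x (fun _ => x) 0 z, hC0,
        coord_self P μ hprob hcyl x, one_mul]
    intro t v y T
    have harg : {ω : Traj | ω (t + (k+1)) ∈ T} = {ω : Traj | ω (t + 1 + k) ∈ T} := by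
      simp only [show t + (k+1) = t + 1 + k from by omega]
    rw [harg, C_succ v t, Set.iUnion_inter,
      measure_iUnion
        (fun z z' hzz' => ((disj_update v t) hzz').mono
          Set.inter_subset_left Set.inter_subset_left)
        (fun z => (measC _ _).inter (measCoord _ _))]
    have hterm : ∀ z : St,
        μ y (C (Function.update v (t+1) z) (t+1) ∩ {ω : Traj | ω (t + 1 + k) ∈ T})
          = μ y (C v t) * (ENNReal.ofReal (P (v t) z) * μ z {ω : Traj | ω k ∈ T}) := by
      intro z
      rw [ih (t+1) (Function.update v (t+1) z) y T, Function.update_self,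
        cyl_step P μ hPnonneg hprob hcyl y v t z, mul_assoc]
    rw [tsum_congr hterm, ENNReal.tsum_mul_left, ← fwd (v t) T, ← C_succ v t]

def ext (t : ℕ) (v : Fin (t+1) → St) : Traj := fun i => v ⟨min i t, by omega⟩

lemma ext_agree (t : ℕ) (v : Fin (t+1) → St) (i : ℕ) (hi : i ≤ t) :
    ext t v i = v ⟨i, by omega⟩ := by
  simp only [ext, Nat.min_eq_left hi]

lemma decomp (y : St) (t : ℕ) (D E : Set Traj)
    (hdet : ∀ ω ω' : Traj, (∀ i ≤ t, ω i = ω' i) → ω ∈ D → ω' ∈ D)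
    (hE : MeasurableSet E) :
    μ y (D ∩ E) = ∑' v : {v : Fin (t+1) → St // ext t v ∈ D},
      μ y (C (ext t v.1) t ∩ E) := by
  have hset : D = ⋃ v : {v : Fin (t+1) → St // ext t v ∈ D}, C (ext t v.1) t := by
    ext ω
    simp only [Set.mem_iUnion]
    constructor
    · intro hω
      have hagr : ∀ i ≤ t, ω i = ext t (fun j : Fin (t+1) => ω j.val) i := fun i hi => by
        rw [ext_agree t _ i hi]
      exact ⟨⟨fun j => ω j.val, hdet ω _ hagr hω⟩, hagr⟩
    · rintro ⟨v, hω⟩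
      exact hdet (ext t v.1) ω (fun i hi => (hω i hi).symm) v.2
  have hdisj : Pairwise (Function.onFun Disjoint
      fun v : {v : Fin (t+1) → St // ext t v ∈ D} => C (ext t v.1) t ∩ E) := by
    intro v v' hvv'
    simp only [Function.onFun, Set.disjoint_left]
    intro ω h h'
    apply hvv'
    apply Subtype.ext
    funext j
    have hjt : j.val ≤ t := Nat.lt_succ_iff.mp j.isLt
    have h1 : ω j.val = ext t v.1 j.val := h.1 j.val hjt
    have h2 : ω j.val = ext t v'.1 j.val := h'.1 j.val hjt
    have e1 := ext_agree t v.1 j.val hjt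
    have e2 := ext_agree t v'.1 j.val hjt
    rw [e1] at h1; rw [e2] at h2
    have : v.1 ⟨j.val, by omega⟩ = v'.1 ⟨j.val, by omega⟩ := h1.symm.trans h2
    simpa using this
  calc μ y (D ∩ E) = μ y (⋃ v : {v : Fin (t+1) → St // ext t v ∈ D}, C (ext t v.1) t ∩ E) := by
        rw [← Set.iUnion_inter, ← hset]
    _ = ∑' v : {v : Fin (t+1) → St // ext t v ∈ D}, μ y (C (ext t v.1) t ∩ E) :=
        measure_iUnion hdisj fun v => (measC _ _).inter hE

end Main

lemma one_sub_sum_le_prod (s : Finset ℕ) (f : ℕ → ℝ) (h : ∀ i ∈ s, f i ∈ Set.Icc (0:ℝ) 1) :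
    1 - ∑ i ∈ s, (1 - f i) ≤ ∏ i ∈ s, f i := by
  induction s using Finset.cons_induction with
  | empty => simp
  | cons a s ha ih =>
    rw [Finset.prod_cons, Finset.sum_cons]
    have hmem := h a (Finset.mem_cons_self a s)
    have ih' := ih fun i hi => h i (Finset.mem_cons_of_mem hi)
    have hsnn : 0 ≤ ∑ i ∈ s, (1 - f i) :=
      Finset.sum_nonneg fun i hi => by
        have := (h i (Finset.mem_cons_of_mem hi)).2; linarith
    have h1 : f a * (1 - ∑ i ∈ s, (1 - f i)) ≤ f a * ∏ i ∈ s, f i :=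
      mul_le_mul_of_nonneg_left ih' hmem.1
    have h2 : f a * ∑ i ∈ s, (1 - f i) ≤ 1 * ∑ i ∈ s, (1 - f i) :=
      mul_le_mul_of_nonneg_right hmem.2 hsnn
    nlinarith

end TransienceAux


section MainTheorem

open TransienceAux Filter

/-- Abstract transience criterion for a Markov chain on `ℕ³`. Here `P` is a Markov
transition kernel on `ℕ³` and `μ x` is the trajectory law of the canonical chain
`(X_n)_{n≥0} = (ω n)_{n≥0}` started at `x`, characterized by the cylinder formula
(Ionescu-Tulcea construction):
`P_x(X_0 = s_0, …, X_n = s_n) = 1_{s_0 = x} ∏_{i<n} P(s_i, s_{i+1})`.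
Given subsets `S₁, S₂, …` of `ℕ³` and integers `0 < m₁ < m₂ < ⋯` such that
(1) almost surely on `⋂_{n≥1} {X_{m_n} ∈ S_n}` the chain never returns to `(0,0,0)`,
(2) `P_{(0,0,0)}(X_{m₁} ∈ S₁) > 0` and from any `x ∈ S_n` the event
`{X_{m_{n+1}−m_n} ∈ S_{n+1}}` has positive probability, and
(3) this probability is at least `p_n` with `Σ (1−p_n) < ∞`,
the chain started at `(0,0,0)` never returns to `(0,0,0)` with positive probability. -/
theorem transience_criterion
    (P : ℕ × ℕ × ℕ → ℕ × ℕ × ℕ → ℝ)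
    (hPnonneg : ∀ x y, 0 ≤ P x y)
    (hPsum : ∀ x, ∑' y, P x y = 1)
    (μ : ℕ × ℕ × ℕ → Measure (ℕ → ℕ × ℕ × ℕ))
    (hprob : ∀ x, IsProbabilityMeasure (μ x))
    (hcyl : ∀ (x : ℕ × ℕ × ℕ) (n : ℕ) (s : ℕ → ℕ × ℕ × ℕ),
      (μ x {ω | ∀ i ≤ n, ω i = s i}).toReal
        = (if s 0 = x then 1 else 0) * ∏ i ∈ Finset.range n, P (s i) (s (i + 1)))
    (S : ℕ → Set (ℕ × ℕ × ℕ)) (m : ℕ → ℕ)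
    (hm1 : 0 < m 1) (hmono : ∀ n ≥ 1, m n < m (n + 1))
    (h1 : μ (0, 0, 0)
      {ω | (∀ n ≥ 1, ω (m n) ∈ S n) ∧ ∃ n ≥ 1, ω n = (0, 0, 0)} = 0)
    (h2a : 0 < μ (0, 0, 0) {ω | ω (m 1) ∈ S 1})
    (h2b : ∀ n ≥ 1, ∀ x ∈ S n,
      0 < μ x {ω | ω (m (n + 1) - m n) ∈ S (n + 1)})
    (h3 : ∃ p : ℕ → ℝ, (∀ n, p n ∈ Set.Icc (0 : ℝ) 1)
      ∧ Summable (fun n => 1 - p n)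
      ∧ ∀ n ≥ 1, ∀ x ∈ S n,
          ENNReal.ofReal (p n) ≤ μ x {ω | ω (m (n + 1) - m n) ∈ S (n + 1)}) :
    0 < μ (0, 0, 0) {ω | ∀ n ≥ 1, ω n ≠ (0, 0, 0)} := by
  classical
  obtain ⟨p, hp01, hpsum, hpbound⟩ := h3
  set x0 : St := (0, 0, 0) with hx0
  -- monotonicity of m on [1, ∞)
  have hm_mono : ∀ n N, 1 ≤ n → n ≤ N → m n ≤ m N := by
    intro n N h1' h2'
    obtain ⟨d, rfl⟩ := Nat.exists_eq_add_of_le h2'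
    clear h2'
    induction d with
    | zero => simp
    | succ d ih => exact le_trans ih (le_of_lt (hmono (n + d) (by omega)))
  set A : ℕ → Set Traj := fun N => {ω | ∀ n, 1 ≤ n → n ≤ N → ω (m n) ∈ S n} with hA
  have hAmeas : ∀ N, MeasurableSet (A N) := by
    intro N
    have h : A N = ⋂ n ∈ Finset.Icc 1 N, {ω : Traj | ω (m n) ∈ S n} := by
      ext ω
      simp [hA, Finset.mem_Icc, and_imp]
    rw [h]
    exact Finset.measurableSet_biInter _ fun n _ => measCoord _ _
  have hAdet : ∀ N, 1 ≤ N → ∀ ω ω' : Traj,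
      (∀ i ≤ m N, ω i = ω' i) → ω ∈ A N → ω' ∈ A N := by
    intro N hN ω ω' hagree hω n h1' h2'
    rw [← hagree (m n) (hm_mono n N h1' h2')]
    exact hω n h1' h2'
  have hA1 : A 1 = {ω : Traj | ω (m 1) ∈ S 1} := by
    ext ω
    constructor
    · intro h; exact h 1 le_rfl le_rfl
    · intro h n h1' h2'
      have hn1 : n = 1 := le_antisymm h2' h1'
      rw [hn1]; exact h
  have hAsucc : ∀ N, A (N + 1) = A N ∩ {ω : Traj | ω (m (N + 1)) ∈ S (N + 1)} := by
    intro N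
    ext ω
    constructor
    · intro h
      exact ⟨fun n h1' h2' => h n h1' (by omega), h (N + 1) (by omega) le_rfl⟩
    · rintro ⟨h, hlast⟩ n h1' h2'
      rcases eq_or_lt_of_le h2' with h' | h'
      · rw [h']; exact hlast
      · exact h n h1' (by omega)
  -- total mass decomposition
  have htot : ∀ N, 1 ≤ N → μ x0 (A N)
      = ∑' v : {v : Fin (m N + 1) → St // ext (m N) v ∈ A N},
          μ x0 (C (ext (m N) v.1) (m N)) := by
    intro N hN
    have h := decomp μ x0 (m N) (A N) Set.univ (hAdet N hN) MeasurableSet.univ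
    simpa [Set.inter_univ] using h
  -- one-step identity
  have key : ∀ N, 1 ≤ N → μ x0 (A (N + 1))
      = ∑' v : {v : Fin (m N + 1) → St // ext (m N) v ∈ A N},
          μ x0 (C (ext (m N) v.1) (m N))
            * μ (ext (m N) v.1 (m N)) {ω : Traj | ω (m (N + 1) - m N) ∈ S (N + 1)} := by
    intro N hN
    rw [hAsucc N]
    have hmn : m N + (m (N + 1) - m N) = m (N + 1) := by
      have := hmono N hN; omega
    have hsetT : {ω : Traj | ω (m (N + 1)) ∈ S (N + 1)}
        = {ω : Traj | ω (m N + (m (N + 1) - m N)) ∈ S (N + 1)} := by rw [hmn]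
    rw [hsetT, decomp μ x0 (m N) (A N) _ (hAdet N hN) (measCoord _ _)]
    exact tsum_congr fun v =>
      markov P μ hPnonneg hprob hcyl (m (N + 1) - m N) (m N) (ext (m N) v.1) x0 (S (N + 1))
  -- positivity by induction
  have hpos : ∀ N, 1 ≤ N → 0 < μ x0 (A N) := by
    intro N hN
    induction N, hN using Nat.le_induction with
    | base => rw [hA1]; exact h2a
    | succ N hN ihp =>
      rw [key N hN]
      have hex : ∃ v : {v : Fin (m N + 1) → St // ext (m N) v ∈ A N},
          μ x0 (C (ext (m N) v.1) (m N)) ≠ 0 := by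
        by_contra hc
        push_neg at hc
        rw [htot N hN, ENNReal.tsum_eq_zero.mpr hc] at ihp
        exact lt_irrefl 0 ihp
      obtain ⟨v, hv⟩ := hex
      have hmem : ext (m N) v.1 (m N) ∈ S N := v.2 N hN le_rfl
      exact lt_of_lt_of_le (ENNReal.mul_pos hv (h2b N hN _ hmem).ne') (ENNReal.le_tsum v)
  -- lower bound step
  have step_ge : ∀ N, 1 ≤ N →
      ENNReal.ofReal (p N) * μ x0 (A N) ≤ μ x0 (A (N + 1)) := by
    intro N hN
    rw [key N hN, htot N hN, ← ENNReal.tsum_mul_left]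
    refine ENNReal.tsum_le_tsum fun v => ?_
    rw [mul_comm (ENNReal.ofReal (p N))]
    exact mul_le_mul_right (hpbound N hN _ (v.2 N hN le_rfl)) _
  -- choose a tail index
  have hnn : ∀ n, 0 ≤ 1 - p n := fun n => by have := (hp01 n).2; linarith
  obtain ⟨N0, hN0tail, hN01⟩ : ∃ N0, (∑' i, (1 - p (i + N0))) < 1 / 2 ∧ 1 ≤ N0 := by
    have ht := tendsto_sum_nat_add (fun n => (1 : ℝ) - p n)
    have h2' := ht.eventually_lt_const (by norm_num : (0 : ℝ) < 1 / 2)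
    exact (h2'.and (eventually_ge_atTop 1)).exists
  -- product chain
  have chain : ∀ N, N0 ≤ N →
      ENNReal.ofReal (∏ n ∈ Finset.Ico N0 N, p n) * μ x0 (A N0) ≤ μ x0 (A N) := by
    intro N hN
    induction N, hN using Nat.le_induction with
    | base => simp
    | succ N hN ih =>
      rw [Finset.prod_Ico_succ_top hN]
      have hprodnn : 0 ≤ ∏ n ∈ Finset.Ico N0 N, p n :=
        Finset.prod_nonneg fun n _ => (hp01 n).1
      calc ENNReal.ofReal ((∏ n ∈ Finset.Ico N0 N, p n) * p N) * μ x0 (A N0)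
          = ENNReal.ofReal (p N) * (ENNReal.ofReal (∏ n ∈ Finset.Ico N0 N, p n) * μ x0 (A N0)) := by
            rw [ENNReal.ofReal_mul hprodnn]; ring
        _ ≤ ENNReal.ofReal (p N) * μ x0 (A N) := mul_le_mul_right ih _
        _ ≤ μ x0 (A (N + 1)) := step_ge N (le_trans hN01 hN)
  -- lower bound on the products
  have prodlb : ∀ N, N0 ≤ N → (1 : ℝ) / 2 ≤ ∏ n ∈ Finset.Ico N0 N, p n := by
    intro N hN
    have hsum_le : ∑ n ∈ Finset.Ico N0 N, (1 - p n) ≤ ∑' i, (1 - p (i + N0)) := by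
      rw [Finset.sum_Ico_eq_sum_range]
      have hcg : ∀ i ∈ Finset.range (N - N0), (1 : ℝ) - p (N0 + i) = 1 - p (i + N0) := by
        intro i _; rw [add_comm]
      rw [Finset.sum_congr rfl hcg]
      exact Summable.sum_le_tsum _ (fun i _ => hnn _) ((summable_nat_add_iff N0).mpr hpsum)
    have hp' := one_sub_sum_le_prod (Finset.Ico N0 N) p fun i _ => hp01 i
    linarith
  -- pass to the limit
  have hAnti : Antitone A := by
    intro N N' hNN' ω hω n h1' h2'
    exact hω n h1' (le_trans h2' hNN')
  have hlim := MeasureTheory.tendsto_measure_iInter_atTop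
    (μ := μ x0) (fun N => (hAmeas N).nullMeasurableSet) hAnti ⟨1, measure_ne_top _ _⟩
  have hconst : ∀ N ≥ N0, ENNReal.ofReal (1 / 2) * μ x0 (A N0) ≤ μ x0 (A N) := by
    intro N hN
    refine le_trans ?_ (chain N hN)
    exact mul_le_mul_left (ENNReal.ofReal_le_ofReal (prodlb N hN)) _
  have hI : ENNReal.ofReal (1 / 2) * μ x0 (A N0) ≤ μ x0 (⋂ N, A N) :=
    ge_of_tendsto hlim (eventually_atTop.mpr ⟨N0, hconst⟩)
  have hIpos : 0 < μ x0 (⋂ N, A N) :=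
    lt_of_lt_of_le
      (ENNReal.mul_pos (ENNReal.ofReal_pos.mpr (by norm_num)).ne' (hpos N0 hN01).ne') hI
  -- conclude
  have hsub : (⋂ N, A N)
      ⊆ {ω : Traj | (∀ n ≥ 1, ω (m n) ∈ S n) ∧ ∃ n ≥ 1, ω n = x0}
        ∪ {ω : Traj | ∀ n ≥ 1, ω n ≠ x0} := by
    intro ω hω
    have hωA : ∀ n, 1 ≤ n → ω (m n) ∈ S n := by
      intro n hn
      exact (Set.mem_iInter.mp hω n) n hn le_rfl
    by_cases hr : ∃ n ≥ 1, ω n = x0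
    · exact Or.inl ⟨hωA, hr⟩
    · push_neg at hr
      exact Or.inr hr
  calc (0 : ENNReal) < μ x0 (⋂ N, A N) := hIpos
    _ ≤ μ x0 ({ω : Traj | (∀ n ≥ 1, ω (m n) ∈ S n) ∧ ∃ n ≥ 1, ω n = x0}
          ∪ {ω : Traj | ∀ n ≥ 1, ω n ≠ x0}) := measure_mono hsub
    _ ≤ μ x0 {ω : Traj | (∀ n ≥ 1, ω (m n) ∈ S n) ∧ ∃ n ≥ 1, ω n = x0}
          + μ x0 {ω : Traj | ∀ n ≥ 1, ω n ≠ x0} := measure_union_le _ _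
    _ = μ x0 {ω : Traj | ∀ n ≥ 1, ω n ≠ x0} := by rw [h1, zero_add]

end MainTheorem
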